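/- Let S = (|S|, ≼, E) be as above, c the number of connected components of the Hasse diagram of (|S|, ≼), and p a prime with p > card(|S|) − c + 1. Then for every positive integer n whose residue modulo p is strictly less than the chromatic number of the graph (|S|, E), the integer C(S,n) is divisible by p. In particular, if |S| is nonempty, then p divides C(S,n) whenever p divides n. -/

import Mathlib

open scoped Classical
set_option linter.unusedSectionVars false

/-- The Hasse diagram of a poset `α`: the graph on `α` whose edges are the covering pairs. -/
def hasseGraph (α : Type*) [PartialOrder α] : SimpleGraph α where
  Adj x y := x ⋖ y ∨ y ⋖ x
  symm := ⟨fun _ _ h => h.symm⟩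
  loopless := ⟨fun x h => by
    rcases h with h | h <;> exact lt_irrefl x h.lt⟩

/-- `C(S,n)`: the number of maps `φ : |S| → {1,…,n}` that are isotone for `≼` and satisfy
`φ x ≠ φ y` whenever `{x,y} ∈ E` (the edge set of the graph `G`). -/
noncomputable def orderChromaticCount (α : Type*) [PartialOrder α] (G : SimpleGraph α)
    (n : ℕ) : ℕ :=
  Nat.card {φ : α → Fin n // Monotone φ ∧ ∀ x y : α, G.Adj x y → φ x ≠ φ y}

namespace OCCAux

open Finset Relation

/-! ### Generic counting of monotone maps with equality constraints, by image size -/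

section Generic

variable {β : Type*} [Fintype β] [PartialOrder β] (R : β → β → Prop)

def PP {n : ℕ} (ψ : β → Fin n) : Prop :=
  Monotone ψ ∧ ∀ x y : β, R x y → ψ x = ψ y

noncomputable def sImg (j : ℕ) : ℕ :=
  Nat.card {ψ : β → Fin j // PP R ψ ∧ Function.Surjective ψ}

noncomputable def imgEquiv (n : ℕ) (T : Finset (Fin n)) :
    {ψ : β → Fin n // PP R ψ ∧ Finset.image ψ Finset.univ = T} ≃
      {ψ' : β → Fin T.card // PP R ψ' ∧ Function.Surjective ψ'} where
  toFun := fun ⟨ψ, hPP, hT⟩ =>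
    ⟨fun b => (T.orderIsoOfFin rfl).symm ⟨ψ b, hT ▸ Finset.mem_image_of_mem ψ (mem_univ b)⟩, by
      refine ⟨⟨fun b b' hb => ?_, fun x y hxy => ?_⟩, fun i => ?_⟩
      · exact (T.orderIsoOfFin rfl).symm.monotone (Subtype.mk_le_mk.2 (hPP.1 hb))
      · exact congrArg _ (Subtype.ext (hPP.2 x y hxy))
      · have hiT : ((T.orderIsoOfFin rfl) i : Fin n) ∈ Finset.image ψ Finset.univ := by
          rw [hT]; exact ((T.orderIsoOfFin rfl) i).2
        obtain ⟨b, -, hb⟩ := Finset.mem_image.1 hiT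
        exact ⟨b, (OrderIso.symm_apply_eq _).2 (Subtype.ext hb)⟩⟩
  invFun := fun ⟨ψ', hPP', hs⟩ =>
    ⟨fun b => ((T.orderIsoOfFin rfl) (ψ' b) : Fin n), by
      refine ⟨⟨fun b b' hb => ?_, fun x y hxy => ?_⟩, ?_⟩
      · exact Subtype.coe_le_coe.2 ((T.orderIsoOfFin rfl).monotone (hPP'.1 hb))
      · exact congrArg _ (congrArg _ (hPP'.2 x y hxy))
      · ext t
        simp only [Finset.mem_image, mem_univ, true_and]
        constructor
        · rintro ⟨b, rfl⟩; exact ((T.orderIsoOfFin rfl) (ψ' b)).2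
        · intro ht
          obtain ⟨b, hb⟩ := hs ((T.orderIsoOfFin rfl).symm ⟨t, ht⟩)
          exact ⟨b, by rw [hb, OrderIso.apply_symm_apply]⟩⟩
  left_inv := fun ⟨ψ, hPP, hT⟩ => Subtype.ext (funext fun b => by
    simp only [OrderIso.apply_symm_apply])
  right_inv := fun ⟨ψ', hPP', hs⟩ => Subtype.ext (funext fun b => by
    have : (⟨((T.orderIsoOfFin rfl) (ψ' b) : Fin n), _⟩ : {x // x ∈ T})
        = (T.orderIsoOfFin rfl) (ψ' b) := Subtype.ext rfl
    simp only [this, OrderIso.symm_apply_apply])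

lemma card_PP_eq_sum (n : ℕ) :
    Nat.card {ψ : β → Fin n // PP R ψ}
      = ∑ j ∈ Finset.range (n + 1), n.choose j * sImg R j := by
  have h1 : Nat.card {ψ : β → Fin n // PP R ψ}
      = ∑ T : Finset (Fin n), Nat.card {ψ : β → Fin n // PP R ψ ∧ Finset.image ψ Finset.univ = T} := by
    rw [Nat.card_eq_fintype_card, Fintype.card_subtype]
    rw [Finset.card_eq_sum_card_fiberwise
      (f := fun ψ : β → Fin n => Finset.image ψ Finset.univ) (t := Finset.univ)
      (fun x _ => mem_univ _)]
    refine Finset.sum_congr rfl fun T _ => ?_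
    rw [Finset.filter_filter, Nat.card_eq_fintype_card, Fintype.card_subtype]
  rw [h1]
  have h2 : ∀ T : Finset (Fin n),
      Nat.card {ψ : β → Fin n // PP R ψ ∧ Finset.image ψ Finset.univ = T} = sImg R T.card :=
    fun T => Nat.card_congr (imgEquiv R n T)
  calc ∑ T : Finset (Fin n), Nat.card {ψ : β → Fin n // PP R ψ ∧ Finset.image ψ Finset.univ = T}
      = ∑ T ∈ (Finset.univ : Finset (Fin n)).powerset, sImg R T.card := by
        rw [Finset.powerset_univ]; exact Finset.sum_congr rfl fun T _ => h2 T
    _ = ∑ j ∈ Finset.range (n + 1), n.choose j * sImg R j := by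
        rw [Finset.sum_powerset_apply_card]
        simp [Finset.card_univ]

lemma choose_cast_eq (p : ℕ) (hp : p.Prime) {j : ℕ} (hj : j < p) (n : ℕ) :
    ((n.choose j : ℕ) : ZMod p) = (((n % p).choose j : ℕ) : ZMod p) := by
  haveI := Fact.mk hp
  have h := Choose.choose_modEq_choose_mod_mul_choose_div_nat (n := n) (k := j) (p := p)
  rw [Nat.mod_eq_of_lt hj, Nat.div_eq_of_lt hj, Nat.choose_zero_right, mul_one] at h
  exact (ZMod.natCast_eq_natCast_iff _ _ _).2 h

lemma sum_choose_eq_range_p (p : ℕ) (s : ℕ → ℕ) (hs : ∀ j, p ≤ j → s j = 0) (n : ℕ) :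
    ∑ j ∈ Finset.range (n + 1), n.choose j * s j = ∑ j ∈ Finset.range p, n.choose j * s j := by
  have h1 : ∑ j ∈ Finset.range (n + 1), n.choose j * s j
      = ∑ j ∈ Finset.range (max (n + 1) p), n.choose j * s j := by
    refine Finset.sum_subset (Finset.range_subset_range.2 (le_max_left _ _)) fun j _ hj => ?_
    rw [Finset.mem_range, not_lt] at hj
    rw [Nat.choose_eq_zero_of_lt (by omega), zero_mul]
  have h2 : ∑ j ∈ Finset.range p, n.choose j * s j
      = ∑ j ∈ Finset.range (max (n + 1) p), n.choose j * s j := by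
    refine Finset.sum_subset (Finset.range_subset_range.2 (le_max_right _ _)) fun j _ hj => ?_
    rw [Finset.mem_range, not_lt] at hj
    rw [hs j hj, mul_zero]
  rw [h1, h2]

lemma card_PP_cast (p : ℕ) (hp : p.Prime) (hvan : ∀ j, p ≤ j → sImg R j = 0) (n : ℕ) :
    ((Nat.card {ψ : β → Fin n // PP R ψ} : ℕ) : ZMod p)
      = ∑ j ∈ Finset.range p, (((n % p).choose j : ℕ) : ZMod p) * (sImg R j : ZMod p) := by
  rw [card_PP_eq_sum, sum_choose_eq_range_p p _ hvan n]
  push_cast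
  refine Finset.sum_congr rfl fun j hj => ?_
  rw [Finset.mem_range] at hj
  rw [choose_cast_eq p hp hj n]

end Generic

section Setting

variable {α : Type*} [Fintype α] [PartialOrder α]

def stepRel (F : Finset (Sym2 α)) (x y : α) : Prop :=
  (hasseGraph α).Adj x y ∨ s(x, y) ∈ F

lemma stepRel_symm (F : Finset (Sym2 α)) : Symmetric (stepRel F) := by
  intro x y h
  rcases h with h | h
  · exact Or.inl (h.symm)
  · exact Or.inr (by rwa [Sym2.eq_swap])

def compSetoid (F : Finset (Sym2 α)) : Setoid α :=
  ⟨ReflTransGen (stepRel F),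
    ⟨fun _ => .refl, fun h => by
      haveI : Std.Symm (stepRel F) := ⟨fun a b h => stepRel_symm F h⟩
      exact Std.Symm.symm _ _ h,
      fun h₁ h₂ => h₁.trans h₂⟩⟩

def cmkF (F : Finset (Sym2 α)) (x : α) : Quotient (compSetoid F) :=
  Quotient.mk (compSetoid F) x

noncomputable instance (F : Finset (Sym2 α)) : Fintype (Quotient (compSetoid (α := α) F)) :=
  Fintype.ofFinite _

noncomputable def fibF (F : Finset (Sym2 α)) (K : Quotient (compSetoid (α := α) F)) :
    Finset α := Finset.univ.filter (fun x => cmkF F x = K)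

lemma mem_fibF {F : Finset (Sym2 α)} {K : Quotient (compSetoid (α := α) F)} {x : α} :
    x ∈ fibF F K ↔ cmkF F x = K := by simp [fibF]

lemma stepRel_cmkF_eq {F : Finset (Sym2 α)} {x y : α} (h : stepRel F x y) :
    cmkF F x = cmkF F y :=
  Quotient.sound (ReflTransGen.single h)

lemma le_cmkF_eq (F : Finset (Sym2 α)) {x y : α} (h : x ≤ y) : cmkF F x = cmkF F y := by
  letI : LocallyFiniteOrder α := Fintype.toLocallyFiniteOrder
  have h' := le_iff_reflTransGen_covBy.mp h
  exact Quotient.sound (ReflTransGen.mono (p := stepRel F) (fun a b hab => Or.inl (Or.inl hab)) x y h')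

lemma F_cmkF_eq (F : Finset (Sym2 α)) {x y : α} (h : s(x, y) ∈ F) : cmkF F x = cmkF F y :=
  stepRel_cmkF_eq (Or.inr h)

/-- The constraint relation on the fiber of a class. -/
def RK (F : Finset (Sym2 α)) (K : Quotient (compSetoid (α := α) F))
    (x y : {a : α // cmkF F a = K}) : Prop := s((x : α), (y : α)) ∈ F

def OkF (F : Finset (Sym2 α)) {n : ℕ} (φ : α → Fin n) : Prop :=
  Monotone φ ∧ ∀ x y : α, s(x, y) ∈ F → φ x = φ y

noncomputable def NF (F : Finset (Sym2 α)) (n : ℕ) : ℕ :=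
  Nat.card {φ : α → Fin n // OkF F φ}

noncomputable def MK (F : Finset (Sym2 α)) (K : Quotient (compSetoid (α := α) F)) (n : ℕ) : ℕ :=
  Nat.card {ψ : {a : α // cmkF F a = K} → Fin n // PP (RK F K) ψ}

noncomputable def prodEquiv (F : Finset (Sym2 α)) (n : ℕ) :
    {φ : α → Fin n // OkF F φ} ≃
      ∀ K : Quotient (compSetoid (α := α) F),
        {ψ : {a : α // cmkF F a = K} → Fin n // PP (RK F K) ψ} where
  toFun φ K := ⟨fun x => φ.1 x.1,
    ⟨fun x y hxy => φ.2.1 hxy, fun x y h => φ.2.2 x.1 y.1 h⟩⟩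
  invFun g := by
    have eval_aux : ∀ {K : Quotient (compSetoid (α := α) F)} (a : α) (h : cmkF F a = K),
        (g (cmkF F a)).1 ⟨a, rfl⟩ = (g K).1 ⟨a, h⟩ := by
      intro K a h; subst h; rfl
    refine ⟨fun a => (g (cmkF F a)).1 ⟨a, rfl⟩, fun a b hab => ?_, fun a b hab => ?_⟩
    · have hK : cmkF F b = cmkF F a := (le_cmkF_eq F hab).symm
      show (g (cmkF F a)).1 ⟨a, rfl⟩ ≤ (g (cmkF F b)).1 ⟨b, rfl⟩
      rw [eval_aux b hK]
      exact (g (cmkF F a)).2.1 (show (⟨a, rfl⟩ : {x : α // cmkF F x = cmkF F a}) ≤ ⟨b, hK⟩ from hab)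
    · have hK : cmkF F b = cmkF F a := (F_cmkF_eq F hab).symm
      show (g (cmkF F a)).1 ⟨a, rfl⟩ = (g (cmkF F b)).1 ⟨b, rfl⟩
      rw [eval_aux b hK]
      exact (g (cmkF F a)).2.2 ⟨a, rfl⟩ ⟨b, hK⟩ hab
  left_inv φ := Subtype.ext (funext fun a => rfl)
  right_inv g := by
    have eval_aux : ∀ {K : Quotient (compSetoid (α := α) F)} (a : α) (h : cmkF F a = K),
        (g (cmkF F a)).1 ⟨a, rfl⟩ = (g K).1 ⟨a, h⟩ := by
      intro K a h; subst h; rfl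
    funext K
    refine Subtype.ext (funext fun x => ?_)
    exact eval_aux x.1 x.2

lemma NF_eq_prod (F : Finset (Sym2 α)) (n : ℕ) :
    NF F n = ∏ K : Quotient (compSetoid (α := α) F), MK F K n := by
  rw [NF, Nat.card_congr (prodEquiv F n), Nat.card_pi]; rfl

/-! ### The image-size bound -/

/-- The component map for the Hasse graph. -/
noncomputable def hmk (x : α) : (hasseGraph α).ConnectedComponent :=
  (hasseGraph α).connectedComponentMk x

lemma crossing {F : Finset (Sym2 α)} {S : Finset α} {a b : α}
    (h : ReflTransGen (stepRel F) a b) (ha : a ∈ S) (hb : b ∉ S) :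
    ∃ u ∈ S, ∃ v, v ∉ S ∧ stepRel F u v := by
  induction h with
  | refl => exact absurd ha hb
  | @tail b' c h1 h2 ih =>
    by_cases hb' : b' ∈ S
    · exact ⟨b', hb', c, hb, h2⟩
    · exact ih hb'

lemma grow {F : Finset (Sym2 α)} {K : Quotient (compSetoid (α := α) F)} {γ : Type*}
    [DecidableEq γ] (φ : α → γ) (hφ : ∀ x y : α, s(x, y) ∈ F → φ x = φ y) :
    ∀ (d : ℕ) (S : Finset α), S.Nonempty → (∀ x ∈ S, cmkF F x = K) →
      (fibF F K).card = S.card + d →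
      (S.image φ).card + (S.image hmk).card ≤ S.card + 1 →
      ((fibF F K).image φ).card + ((fibF F K).image hmk).card ≤ (fibF F K).card + 1 := by
  intro d
  induction d with
  | zero =>
    intro S hne hcl hcard hinv
    have hsub : S ⊆ fibF F K := fun x hx => mem_fibF.2 (hcl x hx)
    have hSe : S = fibF F K := Finset.eq_of_subset_of_card_le hsub (by omega)
    rw [← hSe]; omega
  | succ d ih =>
    intro S hne hcl hcard hinv
    obtain ⟨a, ha⟩ := hne
    have hbex : ∃ b ∈ fibF F K, b ∉ S := by
      by_contra hcon
      push_neg at hcon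
      have := Finset.card_le_card (fun x hx => hcon x hx)
      omega
    obtain ⟨b, hbfib, hbS⟩ := hbex
    have hr : ReflTransGen (stepRel F) a b :=
      Quotient.exact ((hcl a ha).trans (mem_fibF.1 hbfib).symm)
    obtain ⟨u, huS, v, hvS, huv⟩ := crossing hr ha hbS
    have hvK : cmkF F v = K := (stepRel_cmkF_eq huv).symm.trans (hcl u huS)
    have hcardins : (insert v S).card = S.card + 1 := Finset.card_insert_of_notMem hvS
    refine ih (insert v S) ⟨a, Finset.mem_insert_of_mem ha⟩
      (fun x hx => ?_) (by omega) ?_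
    · rcases Finset.mem_insert.1 hx with rfl | hx
      · exact hvK
      · exact hcl x hx
    · rw [Finset.image_insert, Finset.image_insert]
      rcases huv with hadj | hFuv
      · have hc : hmk v = hmk u :=
          SimpleGraph.ConnectedComponent.sound hadj.symm.reachable
        rw [hc, Finset.insert_eq_self.2 (Finset.mem_image_of_mem _ huS)]
        have h1 := Finset.card_insert_le (φ v) (S.image φ)
        omega
      · have hv : φ v = φ u := (hφ u v hFuv).symm
        rw [hv, Finset.insert_eq_self.2 (Finset.mem_image_of_mem _ huS)]
        have h1 := Finset.card_insert_le (hmk v) (S.image hmk)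
        omega

lemma image_bound {F : Finset (Sym2 α)} (K : Quotient (compSetoid (α := α) F)) {γ : Type*}
    [DecidableEq γ] (φ : α → γ) (hφ : ∀ x y : α, s(x, y) ∈ F → φ x = φ y) :
    ((fibF F K).image φ).card + ((fibF F K).image hmk).card ≤ (fibF F K).card + 1 := by
  obtain ⟨x₀, hx₀⟩ := Quotient.exists_rep K
  have hx₀' : cmkF F x₀ = K := hx₀
  have hmem : x₀ ∈ fibF F K := mem_fibF.2 hx₀'
  have hpos : 1 ≤ (fibF F K).card := Finset.card_pos.2 ⟨x₀, hmem⟩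
  refine grow φ hφ ((fibF F K).card - 1) {x₀} ⟨x₀, Finset.mem_singleton_self x₀⟩
    (fun x hx => by rw [Finset.mem_singleton.1 hx]; exact hx₀') (by simp; omega) ?_
  simp

/-- The induced map from Hasse components to `F`-components. -/
lemma walk_cmkF (F : Finset (Sym2 α)) {v w : α} (pw : (hasseGraph α).Walk v w) :
    cmkF F v = cmkF F w := by
  induction pw with
  | nil => rfl
  | cons h _ ih => exact (stepRel_cmkF_eq (Or.inl h)).trans ih

noncomputable def qMap (F : Finset (Sym2 α)) :
    (hasseGraph α).ConnectedComponent → Quotient (compSetoid (α := α) F) :=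
  SimpleGraph.ConnectedComponent.lift (cmkF F) (fun v w pw _ => walk_cmkF F pw)

lemma qMap_hmk (F : Finset (Sym2 α)) (x : α) : qMap F (hmk x) = cmkF F x := rfl

noncomputable instance : Fintype ((hasseGraph α).ConnectedComponent) := Fintype.ofFinite _

lemma filter_qMap_eq_image (F : Finset (Sym2 α)) (K : Quotient (compSetoid (α := α) F)) :
    Finset.univ.filter (fun C => qMap F C = K) = (fibF F K).image hmk := by
  ext C
  simp only [Finset.mem_filter, Finset.mem_univ, true_and, Finset.mem_image]
  constructor
  · intro hC
    refine ⟨C.out, mem_fibF.2 ?_, C.out_eq⟩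
    rw [← qMap_hmk F C.out]
    rw [show hmk C.out = C from C.out_eq]
    exact hC
  · rintro ⟨x, hx, rfl⟩
    rw [qMap_hmk]; exact mem_fibF.1 hx

lemma card_eq_sum_fib (F : Finset (Sym2 α)) :
    Fintype.card α = ∑ K : Quotient (compSetoid (α := α) F), (fibF F K).card := by
  rw [← Finset.card_univ]
  exact Finset.card_eq_sum_card_fiberwise (f := cmkF F) (fun x _ => Finset.mem_univ _)

lemma comp_eq_sum_fib (F : Finset (Sym2 α)) :
    Nat.card ((hasseGraph α).ConnectedComponent)
      = ∑ K : Quotient (compSetoid (α := α) F), ((fibF F K).image hmk).card := by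
  rw [Nat.card_eq_fintype_card, ← Finset.card_univ,
    Finset.card_eq_sum_card_fiberwise (f := qMap F) (fun x _ => Finset.mem_univ _)]
  exact Finset.sum_congr rfl fun K _ => by rw [filter_qMap_eq_image]

lemma jc_pos (F : Finset (Sym2 α)) (K : Quotient (compSetoid (α := α) F)) :
    1 ≤ ((fibF F K).image hmk).card := by
  obtain ⟨x₀, hx₀⟩ := Quotient.exists_rep K
  exact Finset.card_pos.2 ⟨hmk x₀, Finset.mem_image_of_mem _ (mem_fibF.2 hx₀)⟩

/-- The vanishing lemma: no surjection onto `Fin j` for `j ≥ p`. -/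
lemma sImg_vanish {p : ℕ}
    (hbound : Fintype.card α - Nat.card (hasseGraph α).ConnectedComponent + 1 < p)
    (F : Finset (Sym2 α)) (K : Quotient (compSetoid (α := α) F)) {j : ℕ} (hj : p ≤ j) :
    sImg (RK F K) j = 0 := by
  rw [sImg, Nat.card_eq_zero]
  left
  constructor
  rintro ⟨ψ, ⟨hmono, hconst⟩, hsurj⟩
  obtain ⟨x₀, hx₀⟩ := Quotient.exists_rep K
  have hx₀' : cmkF F x₀ = K := hx₀
  set φ : α → Fin j := fun a => if h : cmkF F a = K then ψ ⟨a, h⟩ else ψ ⟨x₀, hx₀'⟩ with hφdef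
  have hφ : ∀ x y : α, s(x, y) ∈ F → φ x = φ y := by
    intro x y hxy
    have hcl := F_cmkF_eq F hxy
    by_cases hx : cmkF F x = K
    · have hy : cmkF F y = K := hcl ▸ hx
      simp only [hφdef, dif_pos hx, dif_pos hy]
      exact hconst ⟨x, hx⟩ ⟨y, hy⟩ hxy
    · have hy : ¬ cmkF F y = K := fun h => hx (hcl.trans h)
      simp only [hφdef, dif_neg hx, dif_neg hy]
  have himg : (fibF F K).image φ = Finset.image ψ Finset.univ := by
    ext i
    simp only [Finset.mem_image]
    constructor
    · rintro ⟨a, haf, rfl⟩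
      have ha := mem_fibF.1 haf
      exact ⟨⟨a, ha⟩, Finset.mem_univ _, by simp [hφdef, dif_pos ha]⟩
    · rintro ⟨x, -, rfl⟩
      exact ⟨x.1, mem_fibF.2 x.2, by simp [hφdef, dif_pos x.2]⟩
  have hcardimg : ((fibF F K).image φ).card = j := by
    rw [himg, Finset.image_univ_of_surjective hsurj, Finset.card_univ, Fintype.card_fin]
  have hb := image_bound K φ hφ
  rw [hcardimg] at hb
  -- global counting
  have hm := card_eq_sum_fib F
  have hc := comp_eq_sum_fib F
  have hKu : K ∈ (Finset.univ : Finset (Quotient (compSetoid (α := α) F))) := Finset.mem_univ _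
  have hm2 : Fintype.card α = (fibF F K).card
      + ∑ K' ∈ Finset.univ.erase K, (fibF F K').card := by
    rw [hm, ← Finset.add_sum_erase _ _ hKu]
  have hc2 : Nat.card ((hasseGraph α).ConnectedComponent) = ((fibF F K).image hmk).card
      + ∑ K' ∈ Finset.univ.erase K, ((fibF F K').image hmk).card := by
    rw [hc, ← Finset.add_sum_erase _ _ hKu]
  have hle : ∑ K' ∈ Finset.univ.erase K, ((fibF F K').image hmk).card
      ≤ ∑ K' ∈ Finset.univ.erase K, (fibF F K').card :=
    Finset.sum_le_sum fun K' _ => Finset.card_image_le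
  have hjc := jc_pos F K
  omega

lemma NF_cast_congr {p : ℕ} (hp : p.Prime)
    (hbound : Fintype.card α - Nat.card (hasseGraph α).ConnectedComponent + 1 < p)
    (F : Finset (Sym2 α)) {n r : ℕ} (hnr : n % p = r % p) :
    ((NF F n : ℕ) : ZMod p) = ((NF F r : ℕ) : ZMod p) := by
  rw [NF_eq_prod, NF_eq_prod]
  push_cast
  refine Finset.prod_congr rfl fun K _ => ?_
  simp only [MK]
  rw [card_PP_cast (RK F K) p hp (fun j hj => sImg_vanish hbound F K hj) n,
      card_PP_cast (RK F K) p hp (fun j hj => sImg_vanish hbound F K hj) r, hnr]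

lemma diag_iff {t : Finset (Sym2 α)} {n : ℕ} (φ : α → Fin n) :
    (∀ e ∈ t, (Sym2.map φ e).IsDiag) ↔ ∀ x y : α, s(x, y) ∈ t → φ x = φ y := by
  constructor
  · intro h x y hxy
    have := h s(x, y) hxy
    rwa [Sym2.map_pair_eq, Sym2.mk_isDiag_iff] at this
  · intro h e
    induction e using Sym2.ind with
    | _ x y =>
      intro he
      rw [Sym2.map_pair_eq, Sym2.mk_isDiag_iff]
      exact h x y he

lemma count_cast {p : ℕ} (G : SimpleGraph α) (n : ℕ) :
    ((orderChromaticCount α G n : ℕ) : ZMod p) =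
      ∑ F ∈ G.edgeFinset.powerset, (-1 : ZMod p) ^ F.card * ((NF F n : ℕ) : ZMod p) := by
  have hsub : ∀ t : Finset (Sym2 α),
      ((NF t n : ℕ) : ZMod p) = ∑ φ : α → Fin n,
        (if Monotone φ then (1 : ZMod p) else 0)
          * (if ∀ e ∈ t, (Sym2.map φ e).IsDiag then (1 : ZMod p) else 0) := by
    intro t
    have h1 : NF t n
        = Fintype.card {φ : α → Fin n // Monotone φ ∧ ∀ e ∈ t, (Sym2.map φ e).IsDiag} := by
      rw [NF, Nat.card_eq_fintype_card]
      refine Fintype.card_congr (Equiv.subtypeEquivRight fun φ => ?_)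
      exact ⟨fun h => ⟨h.1, (diag_iff φ).2 h.2⟩, fun h => ⟨h.1, (diag_iff φ).1 h.2⟩⟩
    rw [h1, Fintype.card_subtype, ← Finset.sum_boole]
    refine Finset.sum_congr rfl fun φ _ => ?_
    by_cases h1' : Monotone φ <;>
      by_cases h2' : ∀ e ∈ t, (Sym2.map φ e).IsDiag <;>
      simp [h1', h2']
  have h0 : ((orderChromaticCount α G n : ℕ) : ZMod p)
      = ∑ φ : α → Fin n, (if Monotone φ then (1 : ZMod p) else 0)
          * ∏ e ∈ G.edgeFinset, (1 - if (Sym2.map φ e).IsDiag then (1 : ZMod p) else 0) := by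
    rw [orderChromaticCount, Nat.card_eq_fintype_card, Fintype.card_subtype, ← Finset.sum_boole]
    refine Finset.sum_congr rfl fun φ _ => ?_
    by_cases hm : Monotone φ
    · simp only [hm, true_and, if_true, one_mul]
      by_cases hpr : ∀ x y : α, G.Adj x y → φ x ≠ φ y
      · rw [if_pos hpr]
        refine (Finset.prod_eq_one fun e he => ?_).symm
        have hnd : ¬ (Sym2.map φ e).IsDiag := by
          revert he
          induction e using Sym2.ind with
          | _ x y =>
            intro he
            rw [SimpleGraph.mem_edgeFinset, SimpleGraph.mem_edgeSet] at he
            rw [Sym2.map_pair_eq, Sym2.mk_isDiag_iff]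
            exact hpr x y he
        rw [if_neg hnd, sub_zero]
      · rw [if_neg hpr]
        push_neg at hpr
        obtain ⟨x, y, hadj, heq⟩ := hpr
        refine (Finset.prod_eq_zero (i := s(x, y))
          (SimpleGraph.mem_edgeFinset.2 ((SimpleGraph.mem_edgeSet G).2 hadj)) ?_).symm
        rw [Sym2.map_pair_eq, if_pos (Sym2.mk_isDiag_iff.2 heq), sub_self]
    · simp [hm]
  have hexp : ∀ φ : α → Fin n,
      ∏ e ∈ G.edgeFinset, (1 - if (Sym2.map φ e).IsDiag then (1 : ZMod p) else 0)
        = ∑ t ∈ G.edgeFinset.powerset, (-1 : ZMod p) ^ t.card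
            * (if ∀ e ∈ t, (Sym2.map φ e).IsDiag then (1 : ZMod p) else 0) := by
    intro φ
    rw [Finset.prod_congr rfl (fun e (_ : e ∈ G.edgeFinset) =>
      show (1 - if (Sym2.map φ e).IsDiag then (1 : ZMod p) else 0)
        = (-(if (Sym2.map φ e).IsDiag then (1 : ZMod p) else 0)) + 1 from by ring)]
    rw [Finset.prod_add]
    refine Finset.sum_congr rfl fun t ht => ?_
    rw [Finset.prod_const_one, mul_one]
    rw [Finset.prod_congr rfl (fun e (_ : e ∈ t) =>
      (neg_one_mul (if (Sym2.map φ e).IsDiag then (1 : ZMod p) else 0)).symm)]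
    rw [Finset.prod_mul_distrib, Finset.prod_const, Finset.prod_boole]
    exact congrArg _ (ite_congr rfl (fun _ => rfl) (fun _ => rfl))
  rw [h0, Finset.sum_congr rfl (fun φ (_ : φ ∈ Finset.univ) => by rw [hexp φ, Finset.mul_sum]),
    Finset.sum_comm]
  refine Finset.sum_congr rfl fun t ht => ?_
  rw [hsub t, Finset.mul_sum]
  exact Finset.sum_congr rfl fun φ _ => by ring

lemma count_zero (G : SimpleGraph α) {r : ℕ} (hlt : ((r : ℕ) : ℕ∞) < G.chromaticNumber) :
    orderChromaticCount α G r = 0 := by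
  rw [orderChromaticCount, Nat.card_eq_zero]
  left
  constructor
  rintro ⟨φ, hmono, hproper⟩
  have hc : G.Colorable r := ⟨SimpleGraph.Coloring.mk φ (fun {x y} h => hproper x y h)⟩
  exact absurd hc.chromaticNumber_le (not_le.2 hlt)

end Setting

end OCCAux


/-- Corollary 2. Let `c` be the number of connected components of the Hasse
diagram of `(|S|, ≼)` and `p` a prime with `p > card |S| − c + 1`. Then for every positive `n`
whose residue mod `p` is less than the chromatic number of the graph `(|S|, E)`, `p` divides
`C(S,n)`; in particular, if `|S|` is nonempty, `p ∣ C(S,n)` whenever `p ∣ n`. -/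
theorem orderChromaticCount_divisible (α : Type*) [Fintype α] [PartialOrder α]
    (G : SimpleGraph α) (p : ℕ) (hp : p.Prime)
    (hbound : Fintype.card α - Nat.card (hasseGraph α).ConnectedComponent + 1 < p) :
    (∀ n : ℕ, 0 < n → ((n % p : ℕ) : ℕ∞) < G.chromaticNumber →
        p ∣ orderChromaticCount α G n) ∧
      (Nonempty α → ∀ n : ℕ, p ∣ n → p ∣ orderChromaticCount α G n) := by
  have key : ∀ n : ℕ, ((n % p : ℕ) : ℕ∞) < G.chromaticNumber →
      p ∣ orderChromaticCount α G n := by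
    intro n hlt
    haveI : NeZero p := ⟨hp.pos.ne'⟩
    rw [← ZMod.natCast_eq_zero_iff]
    have h1 : ((orderChromaticCount α G n : ℕ) : ZMod p)
        = ((orderChromaticCount α G (n % p) : ℕ) : ZMod p) := by
      rw [OCCAux.count_cast G n, OCCAux.count_cast G (n % p)]
      refine Finset.sum_congr rfl fun F _ => ?_
      rw [OCCAux.NF_cast_congr hp hbound F
        (show n % p = (n % p) % p from (Nat.mod_mod_of_dvd n dvd_rfl).symm)]
    rw [h1, OCCAux.count_zero G hlt, Nat.cast_zero]
  constructor
  · exact fun n _ hlt => key n hlt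
  · intro hne n hdvd
    rcases Nat.eq_zero_or_pos n with rfl | hn
    · have h : orderChromaticCount α G 0 = 0 := by
        rw [orderChromaticCount, Nat.card_eq_zero]
        left
        constructor
        rintro ⟨φ, -⟩
        exact (φ hne.some).elim0
      rw [h]
      exact dvd_zero p
    · haveI := hne
      have h0 : n % p = 0 := Nat.eq_zero_of_dvd_of_lt (Nat.dvd_mod_iff dvd_rfl |>.2 hdvd) (Nat.mod_lt n hp.pos)
      refine key n ?_
      rw [h0, Nat.cast_zero]
      exact SimpleGraph.chromaticNumber_pos G.colorable_of_fintype
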